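/- Let d ≥ 1 and B ≥ 1, and let A be a d-counter automaton with s states. If A has a B-bounded accepting run, then A has a B-bounded accepting run that fires at most s·d·B^{d−1} zero-test transitions. -/

import Mathlib

/-- A `d`-dimensional vector addition system with states. -/
structure VASS (d : ℕ) where
  Q : Finset ℕ
  T : Finset (ℕ × (Fin d → ℤ) × ℕ)
  T_src : ∀ t ∈ T, t.1 ∈ Q
  T_tgt : ∀ t ∈ T, t.2.2 ∈ Q

/-- A configuration: a state together with a vector of natural counter values. -/
abbrev VASS.Conf (d : ℕ) := ℕ × (Fin d → ℕ)

/-- One step of a VASS: fire a transition whose effect keeps all counters nonnegative. -/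
def VASS.Step {d : ℕ} (V : VASS d) (c c' : VASS.Conf d) : Prop :=
  ∃ u : Fin d → ℤ, (c.1, u, c'.1) ∈ V.T ∧ ∀ i, (c'.2 i : ℤ) = (c.2 i : ℤ) + u i

/-- Reachability: existence of a run (finite sequence of fired transitions). -/
def VASS.Reach {d : ℕ} (V : VASS d) : VASS.Conf d → VASS.Conf d → Prop :=
  Relation.ReflTransGen V.Step

/-- Unary size of a VASS: `|Q| + Σ_{(p,u,q)∈T} (1 + Σ_i |u_i|)`. -/
def VASS.unarySize {d : ℕ} (V : VASS d) : ℕ :=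
  V.Q.card + ∑ t ∈ V.T, (1 + ∑ i, (t.2.1 i).natAbs)

/-- Binary size of a VASS: `|Q| + Σ_{(p,u,q)∈T} (1 + Σ_i (⌊log₂(|u_i|+1)⌋ + 1))`. -/
def VASS.binarySize {d : ℕ} (V : VASS d) : ℕ :=
  V.Q.card + ∑ t ∈ V.T, (1 + ∑ i, (Nat.log 2 ((t.2.1 i).natAbs + 1) + 1))

/-- The edge relation of the underlying directed graph on states. -/
def VASS.Edge {d : ℕ} (V : VASS d) (p q : ℕ) : Prop :=
  ∃ u, (p, u, q) ∈ V.T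

/-- A (simple) state-cycle: a nonempty duplicate-free list of states with edges along
the list and an edge from the last state back to the first one. -/
def VASS.IsCycle {d : ℕ} (V : VASS d) (l : List ℕ) : Prop :=
  l ≠ [] ∧ l.Nodup ∧ List.Chain' V.Edge (l ++ l.take 1)

/-- A VASS is flat if every state lies on at most one state-cycle
(cycles are identified up to rotation). -/
def VASS.Flat {d : ℕ} (V : VASS d) : Prop :=
  ∀ (q : ℕ) (l₁ l₂ : List ℕ), V.IsCycle l₁ → V.IsCycle l₂ → q ∈ l₁ → q ∈ l₂ →
    List.IsRotated l₁ l₂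

/-- A `d`-counter automaton: a `d`-VASS together with zero-test transitions and
distinguished initial and accepting states. -/
structure CounterAutomaton (d : ℕ) where
  Q : Finset ℕ
  T : Finset (ℕ × (Fin d → ℤ) × ℕ)
  Z : Finset (ℕ × Fin d × ℕ)
  q0 : ℕ
  qacc : ℕ
  T_src : ∀ t ∈ T, t.1 ∈ Q
  T_tgt : ∀ t ∈ T, t.2.2 ∈ Q
  Z_src : ∀ t ∈ Z, t.1 ∈ Q
  Z_tgt : ∀ t ∈ Z, t.2.2 ∈ Q
  q0_mem : q0 ∈ Q
  qacc_mem : qacc ∈ Q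

/-- A step of a counter automaton; the boolean records whether the step is a zero-test
(firable only when the tested counter is zero, leaving counters unchanged) or an
ordinary VASS transition. -/
def CounterAutomaton.Step {d : ℕ} (A : CounterAutomaton d)
    (c : VASS.Conf d) (zt : Bool) (c' : VASS.Conf d) : Prop :=
  if zt then
    ∃ i : Fin d, (c.1, i, c'.1) ∈ A.Z ∧ c.2 i = 0 ∧ c'.2 = c.2
  else
    ∃ u : Fin d → ℤ, (c.1, u, c'.1) ∈ A.T ∧ ∀ i, (c'.2 i : ℤ) = (c.2 i : ℤ) + u i

/-- `c 0, c 1, …, c n` is a run of `A`, where `z j` records whether the `j`-th step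
is a zero-test. -/
def CounterAutomaton.IsRun {d : ℕ} (A : CounterAutomaton d)
    (n : ℕ) (c : ℕ → VASS.Conf d) (z : ℕ → Bool) : Prop :=
  ∀ j < n, A.Step (c j) (z j) (c (j+1))

/-- A run is accepting if it goes from the initial state with all counters zero to
the accepting state with all counters zero. -/
def CounterAutomaton.IsAccepting {d : ℕ} (A : CounterAutomaton d)
    (n : ℕ) (c : ℕ → VASS.Conf d) : Prop :=
  c 0 = (A.q0, fun _ => 0) ∧ c n = (A.qacc, fun _ => 0)

/-- A run is `B`-bounded if the sum of all counters is `< B` at every configuration. -/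
def CounterAutomaton.BoundedRun {d : ℕ} (B n : ℕ) (c : ℕ → VASS.Conf d) : Prop :=
  ∀ j ≤ n, ∑ i, (c j).2 i < B

/-- The number of zero-test transitions fired along a run. -/
def CounterAutomaton.zeroTestCount (n : ℕ) (z : ℕ → Bool) : ℕ :=
  ((Finset.range n).filter fun j => z j = true).card

/-- if a `d`-counter automaton with `s` states has a `B`-bounded
accepting run, then it has one firing at most `s·d·B^(d-1)` zero-test transitions. -/
theorem bounded_run_few_zero_tests (d B : ℕ) (hd : 1 ≤ d) (hB : 1 ≤ B)
    (A : CounterAutomaton d)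
    (h : ∃ (n : ℕ) (c : ℕ → VASS.Conf d) (z : ℕ → Bool),
      A.IsRun n c z ∧ A.IsAccepting n c ∧ CounterAutomaton.BoundedRun B n c) :
    ∃ (n : ℕ) (c : ℕ → VASS.Conf d) (z : ℕ → Bool),
      A.IsRun n c z ∧ A.IsAccepting n c ∧ CounterAutomaton.BoundedRun B n c ∧
      CounterAutomaton.zeroTestCount n z ≤ A.Q.card * d * B ^ (d - 1) := by
  classical
  have hP : ∃ n, ∃ c z, A.IsRun n c z ∧ A.IsAccepting n c ∧
      CounterAutomaton.BoundedRun B n c := h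
  set n := Nat.find hP with hn
  obtain ⟨c, z, hrun, hacc, hbd⟩ := Nat.find_spec hP
  -- In a minimal-length run, no configuration repeats.
  have hinj : ∀ j ∈ Finset.range n, ∀ k ∈ Finset.range n, c j = c k → j = k := by
    intro j hj k hk hck
    by_contra hne
    wlog hlt : j < k generalizing j k
    · exact this k hk j hj hck.symm (Ne.symm hne) (by omega)
    have hkn : k < n := Finset.mem_range.mp hk
    set m := k - j with hm
    have hjk : j + m = k := by omega
    have hm1 : 1 ≤ m := by omega
    have hmn : m ≤ n := by omega
    have hP' : ∃ c' z', A.IsRun (n - m) c' z' ∧ A.IsAccepting (n - m) c' ∧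
        CounterAutomaton.BoundedRun B (n - m) c' := by
      refine ⟨fun t => if t < j then c t else c (t + m),
              fun t => if t < j then z t else z (t + m), ?_, ?_, ?_⟩
      · intro t ht
        by_cases h1 : t < j
        · have h2 : (if t + 1 < j then c (t + 1) else c (t + 1 + m)) = c (t + 1) := by
            by_cases h3 : t + 1 < j
            · simp [h3]
            · have h4 : t + 1 = j := by omega
              have : c (t + 1 + m) = c (t + 1) := by rw [h4, hjk, ← hck]
              simp [h3, this]
          simp only [if_pos h1, h2]
          exact hrun t (by omega)
        · have h3 : ¬ t + 1 < j := by omega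
          simp only [if_neg h1, if_neg h3]
          have : t + 1 + m = t + m + 1 := by omega
          rw [this]
          exact hrun (t + m) (by omega)
      · constructor
        · by_cases h1 : 0 < j
          · simp [h1, hacc.1]
          · have hj0 : j = 0 := by omega
            have hmk : m = k := by omega
            have : c m = c 0 := by rw [hmk, ← hck, hj0]
            simp [h1, this, hacc.1]
        · have h1 : ¬ n - m < j := by omega
          have h2 : n - m + m = n := by omega
          simp [h1, h2, hacc.2]
          exact hacc.2
      · intro t ht
        by_cases h1 : t < j
        · simp only [if_pos h1]
          exact hbd t (by omega)
        · simp only [if_neg h1]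
          exact hbd (t + m) (by omega)
    exact Nat.find_min hP (show n - m < n by omega) hP'
  -- The target finset of configurations at which a zero test can fire.
  set Vf : Finset (Fin d → ℕ) :=
    (Fintype.piFinset fun _ : Fin d => Finset.range B).filter (fun v => ∃ i, v i = 0)
    with hVfdef
  have hVf : Vf.card ≤ d * B ^ (d - 1) := by
    have hsub : Vf ⊆ Finset.univ.biUnion fun i : Fin d =>
        (Fintype.piFinset fun _ : Fin d => Finset.range B).filter (fun v => v i = 0) := by
      intro v hv
      rw [hVfdef, Finset.mem_filter] at hv
      obtain ⟨hv1, i, hi⟩ := hv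
      exact Finset.mem_biUnion.mpr ⟨i, Finset.mem_univ i,
        Finset.mem_filter.mpr ⟨hv1, hi⟩⟩
    have hone : ∀ i : Fin d,
        ((Fintype.piFinset fun _ : Fin d => Finset.range B).filter
          (fun v => v i = 0)).card ≤ B ^ (d - 1) := by
      intro i
      have hsub2 : (Fintype.piFinset fun _ : Fin d => Finset.range B).filter
          (fun v => v i = 0) ⊆ Fintype.piFinset fun j : Fin d =>
            if j = i then ({0} : Finset ℕ) else Finset.range B := by
        intro v hv
        rw [Finset.mem_filter, Fintype.mem_piFinset] at hv
        rw [Fintype.mem_piFinset]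
        intro j
        by_cases hj : j = i
        · simp [hj, hv.2]
        · simp [hj, hv.1 j]
      calc ((Fintype.piFinset fun _ : Fin d => Finset.range B).filter
            (fun v => v i = 0)).card
          ≤ (Fintype.piFinset fun j : Fin d =>
              if j = i then ({0} : Finset ℕ) else Finset.range B).card :=
            Finset.card_le_card hsub2
        _ = ∏ j : Fin d, (if j = i then ({0} : Finset ℕ) else Finset.range B).card :=
            Fintype.card_piFinset _
        _ = ∏ j : Fin d, (if j = i then 1 else B) := by
            apply Finset.prod_congr rfl
            intro j _
            by_cases hj : j = i <;> simp [hj]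
        _ = (if i = i then 1 else B) *
              ∏ j ∈ Finset.univ.erase i, (if j = i then 1 else B) :=
            (Finset.mul_prod_erase Finset.univ _ (Finset.mem_univ i)).symm
        _ = ∏ j ∈ Finset.univ.erase i, (if j = i then 1 else B) := by simp
        _ = ∏ _j ∈ Finset.univ.erase i, B := by
            apply Finset.prod_congr rfl
            intro j hj
            simp [Finset.ne_of_mem_erase hj]
        _ = B ^ (Finset.univ.erase i).card := Finset.prod_const B
        _ = B ^ (d - 1) := by
            rw [Finset.card_erase_of_mem (Finset.mem_univ i)]
            simp
    calc Vf.card ≤ _ := Finset.card_le_card hsub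
      _ ≤ ∑ i : Fin d, ((Fintype.piFinset fun _ : Fin d => Finset.range B).filter
            (fun v => v i = 0)).card := Finset.card_biUnion_le
      _ ≤ ∑ _i : Fin d, B ^ (d - 1) := Finset.sum_le_sum fun i _ => hone i
      _ = d * B ^ (d - 1) := by simp [Finset.sum_const, Finset.card_univ]
  have hcount : CounterAutomaton.zeroTestCount n z ≤ (A.Q ×ˢ Vf).card := by
    unfold CounterAutomaton.zeroTestCount
    apply Finset.card_le_card_of_injOn (fun j => c j)
    · intro j hj
      rw [Finset.mem_coe, Finset.mem_filter, Finset.mem_range] at hj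
      obtain ⟨hjn, hz⟩ := hj
      have hstep := hrun j hjn
      rw [CounterAutomaton.Step, hz, if_pos rfl] at hstep
      obtain ⟨i, hiZ, hi0, _⟩ := hstep
      rw [Finset.mem_coe, Finset.mem_product]
      refine ⟨A.Z_src _ hiZ, ?_⟩
      rw [hVfdef, Finset.mem_filter]
      refine ⟨?_, ⟨i, hi0⟩⟩
      rw [Fintype.mem_piFinset]
      intro i'
      rw [Finset.mem_range]
      calc (c j).2 i' ≤ ∑ i'', (c j).2 i'' :=
            Finset.single_le_sum (fun _ _ => Nat.zero_le _) (Finset.mem_univ i')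
        _ < B := hbd j (le_of_lt hjn)
    · intro j hj k hk hck
      exact hinj j (Finset.mem_of_mem_filter j hj) k (Finset.mem_of_mem_filter k hk) hck
  refine ⟨n, c, z, hrun, hacc, hbd, ?_⟩
  calc CounterAutomaton.zeroTestCount n z ≤ (A.Q ×ˢ Vf).card := hcount
    _ = A.Q.card * Vf.card := Finset.card_product _ _
    _ ≤ A.Q.card * (d * B ^ (d - 1)) := Nat.mul_le_mul_left _ hVf
    _ = A.Q.card * d * B ^ (d - 1) := by ring
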